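/- Let f : 2^E → ℝ≥0 be proportionally submodular. For any set A with |A| = a ≥ 1 and distinct elements e, e_1, …, e_b ∈ E \ A, the marginal gain satisfies f_{A ∪ {e_1,…,e_b}}(e) ≤ ((a+b)/a)·f_A(e) + ((a+b)/(a(a+1)))·Σ_{i=1}^b f_A(e_i), where f_S(x) = f(S ∪ {x}) − f(S). -/

import Mathlib

open Finset

/-- `f` is proportionally submodular. -/
def PropSubmodular {E : Type*} [DecidableEq E] (f : Finset E → ℝ) : Prop :=
  ∀ S T : Finset E,
    (S.card : ℝ) * f T + (T.card : ℝ) * f S ≥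
      ((S ∩ T).card : ℝ) * f (S ∪ T) + ((S ∪ T).card : ℝ) * f (S ∩ T)

lemma key_aux {E : Type*} [DecidableEq E] (f : Finset E → ℝ) (hps : PropSubmodular f)
    (A : Finset E) (ha1 : 1 ≤ A.card) :
    ∀ (n : ℕ) (B : Finset E), B.card = n → Disjoint A B → ∀ e, e ∉ A → e ∉ B →
      (A.card : ℝ) * ((A.card : ℝ) + 1) * (f (insert e (A ∪ B)) - f (A ∪ B)) ≤
        ((A.card : ℝ) + n) * ((A.card : ℝ) + 1) * (f (insert e A) - f A)
          + ((A.card : ℝ) + n) * ∑ x ∈ B, (f (insert x A) - f A) := by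
  have haR : (1:ℝ) ≤ (A.card : ℝ) := by exact_mod_cast ha1
  intro n
  induction n with
  | zero =>
    intro B hB hAB e heA heB
    rcases Finset.card_eq_zero.mp hB with rfl
    simp only [Finset.union_empty, Finset.sum_empty, Nat.cast_zero, add_zero, mul_zero]
    linarith
  | succ n ih =>
    intro B hB hAB e heA heB
    have per : ∀ y ∈ B,
        (A.card : ℝ) * ((A.card : ℝ)+1) * (f (insert e (A ∪ B)) - f (A ∪ B)) ≤
          ((A.card : ℝ) + n + 1) * ((A.card : ℝ)+1) * (f (insert e A) - f A)
            + ((A.card : ℝ) + n + 2) *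
                ((∑ x ∈ B, (f (insert x A) - f A)) - (f (insert y A) - f A))
            + ((A.card : ℝ)+1) * (f (insert y A) - f A) := by
      intro y hy
      have hyA : y ∉ A := Finset.disjoint_right.mp hAB hy
      have hBy : (B.erase y).card = n := by rw [Finset.card_erase_of_mem hy, hB]; omega
      have hABy : Disjoint A (B.erase y) := hAB.mono_right (Finset.erase_subset _ _)
      have heBy : e ∉ B.erase y := fun h => heB (Finset.mem_of_mem_erase h)
      have hyBy : y ∉ B.erase y := Finset.notMem_erase _ _
      have hins : insert y (A ∪ B.erase y) = A ∪ B := by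
        rw [← Finset.union_insert, Finset.insert_erase hy]
      have heAB : e ∉ A ∪ B := by simp [heA, heB]
      have heABy : e ∉ A ∪ B.erase y := by simp [heA, heBy]
      have hi : insert e (A ∪ B.erase y) ∩ (A ∪ B) = A ∪ B.erase y := by
        rw [Finset.insert_inter_of_notMem heAB]
        exact Finset.inter_eq_left.mpr
          (Finset.union_subset_union_right (Finset.erase_subset _ _))
      have hu : insert e (A ∪ B.erase y) ∪ (A ∪ B) = insert e (A ∪ B) := by
        rw [Finset.insert_union]
        congr 1
        exact Finset.union_eq_right.mpr
          (Finset.union_subset_union_right (Finset.erase_subset _ _))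
      have hcAB : (((A ∪ B)).card : ℝ) = (A.card : ℝ) + n + 1 := by
        rw [Finset.card_union_of_disjoint hAB, hB]; push_cast; ring
      have hcABy : (((A ∪ B.erase y)).card : ℝ) = (A.card : ℝ) + n := by
        rw [Finset.card_union_of_disjoint hABy, hBy]; push_cast; ring
      have hceABy : ((insert e (A ∪ B.erase y)).card : ℝ) = (A.card : ℝ) + n + 1 := by
        rw [Finset.card_insert_of_notMem heABy, Finset.card_union_of_disjoint hABy, hBy]
        push_cast; ring
      have hceAB : ((insert e (A ∪ B)).card : ℝ) = (A.card : ℝ) + n + 2 := by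
        rw [Finset.card_insert_of_notMem heAB, Finset.card_union_of_disjoint hAB, hB]
        push_cast; ring
      have H0 := hps (insert e (A ∪ B.erase y)) (A ∪ B)
      rw [hi, hu, hceABy, hcAB, hcABy, hceAB] at H0
      have IH1 := ih (B.erase y) hBy hABy e heA heBy
      have IH2 := ih (B.erase y) hBy hABy y hyA hyBy
      rw [hins] at IH2
      have hsum_erase : ∑ x ∈ B.erase y, (f (insert x A) - f A)
          = (∑ x ∈ B, (f (insert x A) - f A)) - (f (insert y A) - f A) :=
        Finset.sum_erase_eq_sub hy
      rw [hsum_erase] at IH1 IH2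
      have haa : (0:ℝ) ≤ (A.card:ℝ) * ((A.card:ℝ)+1) := by positivity
      have han1 : (0:ℝ) ≤ (A.card:ℝ) + n + 1 := by positivity
      have hpos : (0:ℝ) < (A.card:ℝ) + n := by
        have : (0:ℝ) ≤ (n:ℝ) := Nat.cast_nonneg n
        linarith
      have t0 := mul_le_mul_of_nonneg_left H0.le haa
      have t1 := mul_le_mul_of_nonneg_left IH1 han1
      have hm : ((A.card:ℝ) + n) *
            ((A.card : ℝ) * ((A.card : ℝ)+1) * (f (insert e (A ∪ B)) - f (A ∪ B))) ≤
          ((A.card:ℝ) + n) *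
            (((A.card : ℝ) + n + 1) * ((A.card : ℝ)+1) * (f (insert e A) - f A)
              + ((A.card : ℝ) + n + 2) *
                  ((∑ x ∈ B, (f (insert x A) - f A)) - (f (insert y A) - f A))
              + ((A.card : ℝ)+1) * (f (insert y A) - f A)) := by
        nlinarith [t0, t1, IH2]
      exact le_of_mul_le_mul_left hm hpos
    have hsum2 : (B.card : ℝ) *
          ((A.card : ℝ) * ((A.card : ℝ)+1) * (f (insert e (A ∪ B)) - f (A ∪ B))) ≤
        ∑ y ∈ B, (((A.card : ℝ) + n + 1) * ((A.card : ℝ)+1) * (f (insert e A) - f A)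
            + ((A.card : ℝ) + n + 2) *
                ((∑ x ∈ B, (f (insert x A) - f A)) - (f (insert y A) - f A))
            + ((A.card : ℝ)+1) * (f (insert y A) - f A)) := by
      calc (B.card : ℝ) *
            ((A.card : ℝ) * ((A.card : ℝ)+1) * (f (insert e (A ∪ B)) - f (A ∪ B)))
          = ∑ _y ∈ B, ((A.card : ℝ) * ((A.card : ℝ)+1) *
              (f (insert e (A ∪ B)) - f (A ∪ B))) := by
            rw [Finset.sum_const, nsmul_eq_mul]
        _ ≤ _ := Finset.sum_le_sum per
    have hRHS : ∑ y ∈ B, (((A.card : ℝ) + n + 1) * ((A.card : ℝ)+1) * (f (insert e A) - f A)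
            + ((A.card : ℝ) + n + 2) *
                ((∑ x ∈ B, (f (insert x A) - f A)) - (f (insert y A) - f A))
            + ((A.card : ℝ)+1) * (f (insert y A) - f A))
        = ((n:ℝ)+1) * (((A.card : ℝ) + n + 1) * ((A.card : ℝ)+1) * (f (insert e A) - f A)
            + ((A.card : ℝ) + n + 1) * ∑ x ∈ B, (f (insert x A) - f A)) := by
      rw [Finset.sum_add_distrib, Finset.sum_add_distrib, Finset.sum_const,
        ← Finset.mul_sum, ← Finset.mul_sum, Finset.sum_sub_distrib, Finset.sum_const, hB]
      push_cast; ring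
    rw [hRHS, hB] at hsum2
    have hn1 : (0:ℝ) < (n:ℝ) + 1 := by positivity
    have hm2 : ((n:ℝ)+1) *
          ((A.card : ℝ) * ((A.card : ℝ)+1) * (f (insert e (A ∪ B)) - f (A ∪ B))) ≤
        ((n:ℝ)+1) * (((A.card : ℝ) + ((n:ℕ)+1 : ℕ)) * ((A.card : ℝ)+1) * (f (insert e A) - f A)
            + ((A.card : ℝ) + ((n:ℕ)+1 : ℕ)) * ∑ x ∈ B, (f (insert x A) - f A)) := by
      push_cast at hsum2 ⊢
      linarith
    exact le_of_mul_le_mul_left hm2 hn1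

theorem stmt_3 {E : Type*} [Fintype E] [DecidableEq E]
    (f : Finset E → ℝ) (hnn : ∀ S, 0 ≤ f S) (hps : PropSubmodular f)
    (A B : Finset E) (a b : ℕ) (ha : A.card = a) (hb : B.card = b)
    (ha1 : 1 ≤ a)
    (hAB : Disjoint A B) (e : E) (heA : e ∉ A) (heB : e ∉ B) :
    f (insert e (A ∪ B)) - f (A ∪ B) ≤
      (((a : ℝ) + b) / a) * (f (insert e A) - f A)
        + (((a : ℝ) + b) / ((a : ℝ) * ((a : ℝ) + 1)))
            * ∑ x ∈ B, (f (insert x A) - f A) := by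
  subst ha hb
  have hk := key_aux f hps A ha1 B.card B rfl hAB e heA heB
  have ha0 : (0:ℝ) < (A.card:ℝ) := by
    have : (1:ℝ) ≤ (A.card:ℝ) := by exact_mod_cast ha1
    linarith
  have h2 : (0:ℝ) < (A.card:ℝ) * ((A.card:ℝ)+1) := by positivity
  rw [← mul_le_mul_iff_right₀ h2]
  have heq : (A.card:ℝ) * ((A.card:ℝ)+1) *
        ((((A.card:ℝ) + B.card) / (A.card:ℝ)) * (f (insert e A) - f A)
          + (((A.card:ℝ) + B.card) / ((A.card:ℝ) * ((A.card:ℝ)+1)))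
              * ∑ x ∈ B, (f (insert x A) - f A))
      = ((A.card:ℝ) + B.card) * ((A.card:ℝ)+1) * (f (insert e A) - f A)
          + ((A.card:ℝ) + B.card) * ∑ x ∈ B, (f (insert x A) - f A) := by
    field_simp
  rw [heq]
  linarith [hk]
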